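/- Let λ ≠ 0 and suppose the pair of continuously differentiable functions (p,q) on [0,1] satisfies λ·p(x) = ∫_x^1 q(t) dt and λ·q(x) = ∫_0^x p(t) dt + ∫_x^1 q(t) dt for all x ∈ [0,1]. Then λ = √3 / (2π(k + 1/3)) for some integer k, and p(x) = C·exp(−x/(2λ))·cos(π/6 + (√3/2)·x/λ) for some constant C. -/

import Mathlib

open Real

noncomputable def eigenMu : ℂ := -1/2 + (Real.sqrt 3 / 2) * Complex.I

lemma eigenMu_sq : eigenMu^2 + eigenMu + 1 = 0 := by
  have h3 : Real.sqrt 3 ^ 2 = 3 := Real.sq_sqrt (by norm_num)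
  rw [Complex.ext_iff]
  constructor <;>
    simp [eigenMu, pow_two, Complex.add_re, Complex.mul_re, Complex.mul_im, Complex.add_im] <;>
    nlinarith [h3]

lemma eigen_hdw_ofReal {f : ℝ → ℝ} {u x : ℝ} {s : Set ℝ} (hf : HasDerivWithinAt f u s x) :
    HasDerivWithinAt (fun y => (f y : ℂ)) (u : ℂ) s x := by
  exact hf.ofReal_comp

lemma eigen_exp_eval (c x : ℝ) :
    Complex.exp ((eigenMu / (c:ℂ)) * (x:ℂ)) =
      (Real.exp (-x/(2*c)) : ℂ) *
        ((Real.cos (Real.sqrt 3 / 2 * (x/c)) : ℂ) +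
          (Real.sin (Real.sqrt 3 / 2 * (x/c)) : ℂ) * Complex.I) := by
  by_cases hc : c = 0
  · simp [hc, eigenMu]
  have h1 : (eigenMu / (c:ℂ)) * (x:ℂ) =
      ((-x/(2*c) : ℝ) : ℂ) + ((Real.sqrt 3 / 2 * (x/c) : ℝ) : ℂ) * Complex.I := by
    have hc' : (c:ℂ) ≠ 0 := Complex.ofReal_ne_zero.2 hc
    simp only [eigenMu]
    push_cast
    field_simp
  rw [h1, Complex.exp_add, Complex.exp_mul_I, Complex.ofReal_exp, ← Complex.ofReal_cos,
    ← Complex.ofReal_sin]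

/-- if λ ≠ 0 and the continuously differentiable pair (p,q) on [0,1] is a
nontrivial solution of the integral system λ·p(x) = ∫ₓ¹ q(t) dt and
λ·q(x) = ∫₀ˣ p(t) dt + ∫ₓ¹ q(t) dt, then λ = √3/(2π(k + 1/3)) for some integer k and
p(x) = C·exp(−x/(2λ))·cos(π/6 + (√3/2)·x/λ) for some constant C. -/
theorem eigen_123_system (lam : ℝ) (hlam : lam ≠ 0) (p q : ℝ → ℝ)
    (hp : ContDiffOn ℝ 1 p (Set.Icc 0 1)) (hq : ContDiffOn ℝ 1 q (Set.Icc 0 1))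
    (heq1 : ∀ x ∈ Set.Icc (0 : ℝ) 1, lam * p x = ∫ t in Set.Icc x 1, q t)
    (heq2 : ∀ x ∈ Set.Icc (0 : ℝ) 1,
      lam * q x = (∫ t in Set.Icc (0 : ℝ) x, p t) + ∫ t in Set.Icc x 1, q t)
    (hnontriv : ∃ x ∈ Set.Icc (0 : ℝ) 1, p x ≠ 0 ∨ q x ≠ 0) :
    (∃ k : ℤ, lam = Real.sqrt 3 / (2 * Real.pi * ((k : ℝ) + 1 / 3))) ∧
    ∃ C : ℝ, ∀ x ∈ Set.Icc (0 : ℝ) 1,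
      p x = C * Real.exp (-x / (2 * lam)) *
        Real.cos (Real.pi / 6 + Real.sqrt 3 / 2 * (x / lam)) := by
  have hs3 : Real.sqrt 3 ^ 2 = 3 := Real.sq_sqrt (by norm_num)
  have hs3pos : (0:ℝ) < Real.sqrt 3 := Real.sqrt_pos.2 (by norm_num)
  have hpc : ContinuousOn p (Set.Icc 0 1) := hp.continuousOn
  have hqc : ContinuousOn q (Set.Icc 0 1) := hq.continuousOn
  -- rewrite set integrals as interval integrals
  have hIcc1 : ∀ x : ℝ, x ≤ 1 → (∫ t in Set.Icc x 1, q t) = ∫ t in x..1, q t := by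
    intro x hx
    rw [intervalIntegral.integral_of_le hx, MeasureTheory.integral_Icc_eq_integral_Ioc]
  have hIcc0 : ∀ x : ℝ, 0 ≤ x → (∫ t in Set.Icc (0:ℝ) x, p t) = ∫ t in (0:ℝ)..x, p t := by
    intro x hx
    rw [intervalIntegral.integral_of_le hx, MeasureTheory.integral_Icc_eq_integral_Ioc]
  set G : ℝ → ℝ := fun u => ∫ t in u..1, q t with hGdef
  set H : ℝ → ℝ := fun u => ∫ t in (0:ℝ)..u, p t with hHdef
  have hpG : ∀ x ∈ Set.Icc (0:ℝ) 1, p x = lam⁻¹ * G x := by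
    intro x hx
    have := heq1 x hx
    rw [hIcc1 x hx.2] at this
    field_simp [hGdef]
    linarith [this]
  have hqGH : ∀ x ∈ Set.Icc (0:ℝ) 1, q x = lam⁻¹ * (H x + G x) := by
    intro x hx
    have := heq2 x hx
    rw [hIcc1 x hx.2, hIcc0 x hx.1] at this
    field_simp [hGdef, hHdef]
    linarith [this]
  -- boundary values
  have hp1 : p 1 = 0 := by
    have h := heq1 1 (by norm_num)
    rw [hIcc1 1 le_rfl] at h
    simp at h
    rcases h with h | h
    · exact absurd h hlam
    · exact h
  have hq0 : q 0 = p 0 := by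
    have h1 := heq1 0 (by norm_num)
    have h2 := heq2 0 (by norm_num)
    rw [Set.Icc_self] at h2
    have : (∫ t in ({0} : Set ℝ), p t) = 0 := by
      simp [MeasureTheory.Measure.restrict_singleton]
    rw [this, zero_add, ← h1] at h2
    exact mul_left_cancel₀ hlam h2
  -- derivatives within Icc 0 1
  have hderiv : ∀ x ∈ Set.Icc (0:ℝ) 1,
      HasDerivWithinAt p (lam⁻¹ * (-(q x))) (Set.Icc 0 1) x ∧
      HasDerivWithinAt q (lam⁻¹ * (p x + -(q x))) (Set.Icc 0 1) x := by
    intro x hx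
    haveI : Fact (x ∈ Set.Icc (0:ℝ) 1) := ⟨hx⟩
    have hintq : IntervalIntegrable q MeasureTheory.volume x 1 :=
      (hqc.mono (Set.Icc_subset_Icc hx.1 le_rfl)).intervalIntegrable_of_Icc hx.2
    have hintp : IntervalIntegrable p MeasureTheory.volume 0 x :=
      (hpc.mono (Set.Icc_subset_Icc le_rfl hx.2)).intervalIntegrable_of_Icc hx.1
    have hmeasq : StronglyMeasurableAtFilter q (nhdsWithin x (Set.Icc 0 1))
        MeasureTheory.volume :=
      ⟨Set.Icc 0 1, self_mem_nhdsWithin, hqc.aestronglyMeasurable measurableSet_Icc⟩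
    have hmeasp : StronglyMeasurableAtFilter p (nhdsWithin x (Set.Icc 0 1))
        MeasureTheory.volume :=
      ⟨Set.Icc 0 1, self_mem_nhdsWithin, hpc.aestronglyMeasurable measurableSet_Icc⟩
    have hG' : HasDerivWithinAt G (-(q x)) (Set.Icc 0 1) x :=
      intervalIntegral.integral_hasDerivWithinAt_left hintq hmeasq (hqc x hx)
    have hH' : HasDerivWithinAt H (p x) (Set.Icc 0 1) x :=
      intervalIntegral.integral_hasDerivWithinAt_right hintp hmeasp (hpc x hx)
    constructor
    · exact (hG'.const_mul lam⁻¹).congr (fun y hy => hpG y hy) (hpG x hx)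
    · exact ((hH'.add hG').const_mul lam⁻¹).congr (fun y hy => hqGH y hy) (hqGH x hx)
  -- complex combination
  set f : ℝ → ℂ := fun u => (p u : ℂ) + eigenMu * (q u : ℂ) with hfdef
  set gc : ℂ := -(eigenMu / (lam:ℂ)) with hgcdef
  set g : ℝ → ℂ := fun u => f u * Complex.exp (gc * (u:ℂ)) with hgdef
  have hlam' : (lam:ℂ) ≠ 0 := Complex.ofReal_ne_zero.2 hlam
  have hg' : ∀ x ∈ Set.Icc (0:ℝ) 1, HasDerivWithinAt g 0 (Set.Icc 0 1) x := by
    intro x hx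
    obtain ⟨hp', hq'⟩ := hderiv x hx
    have hf' : HasDerivWithinAt f
        (((lam⁻¹ * (-(q x)) : ℝ) : ℂ) + eigenMu * ((lam⁻¹ * (p x + -(q x)) : ℝ) : ℂ))
        (Set.Icc 0 1) x :=
      (eigen_hdw_ofReal hp').add ((eigen_hdw_ofReal hq').const_mul eigenMu)
    have hexp' : HasDerivWithinAt (fun u : ℝ => Complex.exp (gc * (u:ℂ)))
        (Complex.exp (gc * (x:ℂ)) * gc) (Set.Icc 0 1) x := by
      have hin : HasDerivWithinAt (fun u : ℝ => gc * (u:ℂ)) gc (Set.Icc 0 1) x := by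
        simpa using (eigen_hdw_ofReal (hasDerivWithinAt_id x (Set.Icc 0 1))).const_mul gc
      simpa using hin.cexp
    have hd := hf'.mul hexp'
    have hmu := eigenMu_sq
    have h0 : ((lam⁻¹ * -q x : ℝ) : ℂ) + eigenMu * ((lam⁻¹ * (p x + -q x) : ℝ) : ℂ) + f x * gc
        = 0 := by
      simp only [hfdef, hgcdef]
      push_cast
      linear_combination (-((q x : ℂ)) / (lam:ℂ)) * hmu
    have h0' : (((lam⁻¹ * -q x : ℝ) : ℂ) + eigenMu * ((lam⁻¹ * (p x + -q x) : ℝ) : ℂ))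
          * Complex.exp (gc * (x:ℂ)) + f x * (Complex.exp (gc * (x:ℂ)) * gc) = 0 := by
      linear_combination Complex.exp (gc * (x:ℂ)) * h0
    rw [h0'] at hd
    exact hd
  -- g is constant
  have hgc : ContinuousOn g (Set.Icc 0 1) := by
    apply ContinuousOn.mul
    · exact (Complex.continuous_ofReal.comp_continuousOn hpc).add
        (continuous_const.continuousOn.mul (Complex.continuous_ofReal.comp_continuousOn hqc))
    · exact (Complex.continuous_exp.comp
        (continuous_const.mul Complex.continuous_ofReal)).continuousOn
  have hconst : ∀ x ∈ Set.Icc (0:ℝ) 1, g x = g 0 := by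
    apply constant_of_has_deriv_right_zero hgc
    intro x hx
    have hmem : Set.Icc (0:ℝ) 1 ∈ nhdsWithin x (Set.Ici x) :=
      Filter.mem_of_superset (inter_mem_nhdsWithin (Set.Ici x) (Iio_mem_nhds hx.2))
        (fun y hy => ⟨le_trans hx.1 hy.1, le_of_lt hy.2⟩)
    exact (hg' x ⟨hx.1, hx.2.le⟩).mono_of_mem_nhdsWithin hmem
  -- explicit form of f
  have hf0 : f 0 = (p 0 : ℂ) * (1 + eigenMu) := by
    simp [hfdef, hq0]; ring
  have hfx : ∀ x ∈ Set.Icc (0:ℝ) 1,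
      f x = (p 0 : ℂ) * (1 + eigenMu) * Complex.exp ((eigenMu / (lam:ℂ)) * (x:ℂ)) := by
    intro x hx
    have h := hconst x hx
    have h0 : g 0 = f 0 := by simp [hgdef]
    rw [h0, hf0] at h
    have hne : Complex.exp (gc * (x:ℂ)) ≠ 0 := Complex.exp_ne_zero _
    have : f x = (p 0 : ℂ) * (1 + eigenMu) * (Complex.exp (gc * (x:ℂ)))⁻¹ := by
      field_simp at h ⊢
      linear_combination h
    rw [this, ← Complex.exp_neg]
    congr 1
    rw [hgcdef]; ring_nf
  -- real equations
  have hre : ∀ x ∈ Set.Icc (0:ℝ) 1,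
      p x - q x / 2 = p 0 * Real.exp (-x/(2*lam)) *
        (1/2 * Real.cos (Real.sqrt 3 / 2 * (x/lam))
          - Real.sqrt 3 / 2 * Real.sin (Real.sqrt 3 / 2 * (x/lam))) ∧
      Real.sqrt 3 / 2 * q x = p 0 * Real.exp (-x/(2*lam)) *
        (1/2 * Real.sin (Real.sqrt 3 / 2 * (x/lam))
          + Real.sqrt 3 / 2 * Real.cos (Real.sqrt 3 / 2 * (x/lam))) := by
    intro x hx
    have hmure : eigenMu.re = -(1/2) := by norm_num [eigenMu]
    have hmuim : eigenMu.im = Real.sqrt 3 / 2 := by norm_num [eigenMu]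
    have h := hfx x hx
    rw [eigen_exp_eval lam x] at h
    rw [Complex.ext_iff] at h
    obtain ⟨h1, h2⟩ := h
    simp only [hfdef, Complex.add_re, Complex.add_im, Complex.mul_re, Complex.mul_im,
      Complex.ofReal_re, Complex.ofReal_im, Complex.I_re, Complex.I_im, Complex.one_re,
      Complex.one_im, hmure, hmuim, mul_zero, zero_mul, mul_one, sub_zero, add_zero,
      zero_add, neg_zero, zero_sub] at h1 h2
    constructor
    · linear_combination h1
    · linear_combination h2
  set s3 := Real.sqrt 3 with hs3def
  have hPform : ∀ x ∈ Set.Icc (0:ℝ) 1,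
      p x = (2 * s3 * p 0 / 3) * Real.exp (-x/(2*lam)) *
        Real.cos (Real.pi / 6 + s3 / 2 * (x/lam)) := by
    intro x hx
    obtain ⟨h1, h2⟩ := hre x hx
    rw [Real.cos_add, Real.cos_pi_div_six, Real.sin_pi_div_six]
    have hpx : p x = p 0 * Real.exp (-x/(2*lam)) *
        (Real.cos (s3 / 2 * (x/lam)) - s3 * Real.sin (s3 / 2 * (x/lam)) / 3) := by
      linear_combination h1 + (s3/3) * h2 +
        ((p 0 * Real.exp (-x/(2*lam)) * Real.cos (s3 / 2 * (x/lam)) - q x)/6) * hs3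
    linear_combination hpx - (p 0 * Real.exp (-x/(2*lam)) * Real.cos (s3 / 2 * (x/lam)) / 3) * hs3
  refine ⟨?_, ⟨2 * s3 * p 0 / 3, fun x hx => hPform x hx⟩⟩
  -- nontriviality gives p 0 ≠ 0
  have hp0 : p 0 ≠ 0 := by
    intro hp0
    obtain ⟨x, hx, hne⟩ := hnontriv
    obtain ⟨h1, h2⟩ := hre x hx
    rw [hp0] at h1 h2
    simp only [zero_mul, mul_zero] at h1 h2
    have hqx : q x = 0 := by
      have := mul_eq_zero.1 h2
      rcases this with h | h
      · exact absurd h (by positivity)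
      · exact h
    have hpx : p x = 0 := by linarith
    rcases hne with h | h
    · exact h hpx
    · exact h hqx
  -- eigenvalue condition from p 1 = 0
  have h1 := hPform 1 (by norm_num)
  rw [hp1] at h1
  have hcos : Real.cos (Real.pi / 6 + s3 / 2 * (1/lam)) = 0 := by
    have hC : 2 * s3 * p 0 / 3 ≠ 0 := by
      apply div_ne_zero _ (by norm_num)
      exact mul_ne_zero (mul_ne_zero (by norm_num) (ne_of_gt hs3pos)) hp0
    have hE : Real.exp (-1/(2*lam)) ≠ 0 := Real.exp_ne_zero _
    rcases mul_eq_zero.1 h1.symm with h | h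
    · rcases mul_eq_zero.1 h with h' | h'
      · exact absurd h' hC
      · exact absurd h' hE
    · exact h
  rw [Real.cos_eq_zero_iff] at hcos
  obtain ⟨k, hk⟩ := hcos
  refine ⟨k, ?_⟩
  have hpi : Real.pi > 0 := Real.pi_pos
  have hk3 : ((k:ℝ) + 1/3) ≠ 0 := by
    intro h
    have h' : (3 * k : ℤ) = -1 := by exact_mod_cast (by linarith : (3:ℝ) * (k:ℝ) = -1)
    omega
  have hD : 2 * Real.pi * ((k:ℝ) + 1/3) ≠ 0 :=
    mul_ne_zero (mul_ne_zero (by norm_num) (ne_of_gt hpi)) hk3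
  rw [eq_div_iff hD]
  field_simp at hk
  linarith [hk]
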